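/- Let r be a nonzero real number. Then the logistic map g_r(y) = r·y·(1−y) has a 3-cycle if and only if r ≤ 1 − 2√2 or r ≥ 1 + 2√2. -/

import Mathlib

/-- Forward core: a genuine 3-cycle of `x ↦ x^2 + c` forces `4c + 7 ≤ 0`. -/
lemma quad_forward (c a b d : ℝ) (hab : a ≠ b) (hbd : b ≠ d) (had : a ≠ d)
    (h1 : a^2 + c = b) (h2 : b^2 + c = d) (h3 : d^2 + c = a) : 4*c + 7 ≤ 0 := by
  have e1 : (a - b) * (1 + (a+b) + (a+b)*(b+d)) = 0 := by
    linear_combination (1 + b + d) * h1 - (b + d) * h2 - h3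
  have e2 : (b - d) * (1 + (b+d) + (b+d)*(d+a)) = 0 := by
    linear_combination (1 + d + a) * h2 - (d + a) * h3 - h1
  have e3 : (d - a) * (1 + (d+a) + (d+a)*(a+b)) = 0 := by
    linear_combination (1 + a + b) * h3 - (a + b) * h1 - h2
  have R1 : 1 + (a+b) + (a+b)*(b+d) = 0 :=
    (mul_eq_zero.mp e1).resolve_left (sub_ne_zero.mpr hab)
  have R2 : 1 + (b+d) + (b+d)*(d+a) = 0 :=
    (mul_eq_zero.mp e2).resolve_left (sub_ne_zero.mpr hbd)
  have R3 : 1 + (d+a) + (d+a)*(a+b) = 0 :=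
    (mul_eq_zero.mp e3).resolve_left (sub_ne_zero.mpr had.symm)
  have hkey : (a+b+d)^2 + (a+b+d) + c + 2 = 0 := by
    linear_combination (2/3) * R1 + (2/3) * R2 + (2/3) * R3
      + (1/3) * h1 + (1/3) * h2 + (1/3) * h3
  nlinarith [sq_nonneg (2*(a+b+d) + 1), hkey]

/-- Reverse core: if `4c + 7 ≤ 0`, then `x ↦ x^2 + c` has a 3-cycle. -/
lemma quad_cycle (c : ℝ) (hc : 4*c + 7 ≤ 0) :
    ∃ a b d : ℝ, a ≠ b ∧ b ≠ d ∧ a ≠ d ∧ a^2 + c = b ∧ b^2 + c = d ∧ d^2 + c = a := by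
  obtain ⟨s, hs⟩ : ∃ s : ℝ, s^2 + s + c + 2 = 0 := by
    refine ⟨(-1 + Real.sqrt (-4*c - 7)) / 2, ?_⟩
    have ht2 : Real.sqrt (-4*c - 7) ^ 2 = -4*c - 7 := Real.sq_sqrt (by linarith)
    linear_combination (1/4) * ht2
  -- the cubic whose roots are one 3-cycle
  obtain ⟨a, ha⟩ : ∃ a : ℝ, a^3 - s*a^2 + (c - s - 1)*a - (c*(s+1) + 1) = 0 := by
    set Q : ℝ → ℝ := fun x => x^3 - s*x^2 + (c - s - 1)*x - (c*(s+1) + 1) with hQ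
    set M : ℝ := 1 + |s| + |c - s - 1| + |c*(s+1) + 1| with hM
    have hM1 : 1 ≤ M := by
      have := abs_nonneg s; have := abs_nonneg (c - s - 1); have := abs_nonneg (c*(s+1) + 1)
      linarith
    have hM0 : 0 ≤ M := by linarith
    have hQM : 0 < Q M := by
      have h1 := le_abs_self s; have h2 := neg_abs_le s
      have h3 := le_abs_self (c - s - 1); have h4 := neg_abs_le (c - s - 1)
      have h5 := le_abs_self (c*(s+1) + 1); have h6 := neg_abs_le (c*(s+1) + 1)
      have hMM : M ≤ M^2 := by nlinarith
      simp only [hQ]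
      nlinarith [mul_le_mul_of_nonneg_right h1 (sq_nonneg M),
        mul_le_mul_of_nonneg_right h3 hM0, sq_nonneg M]
    have hQm : Q (-M) < 0 := by
      have h1 := le_abs_self s; have h2 := neg_abs_le s
      have h3 := le_abs_self (c - s - 1); have h4 := neg_abs_le (c - s - 1)
      have h5 := le_abs_self (c*(s+1) + 1); have h6 := neg_abs_le (c*(s+1) + 1)
      simp only [hQ]
      nlinarith [mul_le_mul_of_nonneg_right h2 (sq_nonneg M),
        mul_le_mul_of_nonneg_right h4 hM0, sq_nonneg M]
    have hcont : ContinuousOn Q (Set.Icc (-M) M) := by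
      simp only [hQ]; fun_prop
    have hsub := intermediate_value_Icc (by linarith : -M ≤ M) hcont
    have h0 : (0:ℝ) ∈ Set.Icc (Q (-M)) (Q M) := ⟨le_of_lt hQm, le_of_lt hQM⟩
    obtain ⟨a, -, ha⟩ := hsub h0
    exact ⟨a, by simpa [hQ] using ha⟩
  -- a is 3-periodic
  have h3 : ((a^2 + c)^2 + c)^2 + c = a := by
    linear_combination ((a^2 - a + c) * (a^3 + (1+s)*a^2 + (c+s)*a + (c*s - 1))) * ha
      + (a^6 + a^5 + (3*c - 1)*a^4 + (2*c - 1)*a^3 + (3*c^2 - c)*a^2 + c^2*a + c^3) * hs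
  -- a is not a fixed point
  have hnf : a^2 + c ≠ a := by
    intro hfix
    have h2' : 2*s*a + 2*c + 1 = 0 := by linear_combination -ha + (a + 1 - s) * hfix
    have e6 : 2*s - 4*c + 1 = 0 := by
      linear_combination 4*s^2 * hfix + (2*s - 2*s*a + 2*c + 1) * h2' - 4*c * hs
    have e7 : 16*c^2 + 4*c + 7 = 0 := by linear_combination 4*hs - (2*s + 4*c + 1) * e6
    nlinarith [sq_nonneg (4*c + 1/2), e7]
  refine ⟨a, a^2 + c, (a^2 + c)^2 + c, fun h => hnf h.symm, ?_, ?_, rfl, rfl, h3⟩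
  · -- b ≠ d : otherwise b is fixed and then a is fixed
    intro h
    have hb : (a^2 + c)^2 + c = a^2 + c := h.symm
    rw [hb] at h3
    rw [hb] at h3
    exact hnf h3
  · -- a ≠ d : otherwise a is 2-periodic, forcing s^2+s+c+1 = 0, contradicting hs
    intro h
    have hd : (a^2 + c)^2 + c = a := h.symm
    have hfac : (a^2 - a + c) * (a^2 + a + c + 1) = 0 := by linear_combination hd
    have h2cyc : a^2 + a + c + 1 = 0 := by
      rcases mul_eq_zero.mp hfac with h' | h'
      · exact absurd (by linarith : a^2 + c = a) hnf
      · exact h'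
    have hsa : a = s := by linear_combination -ha + (a - s - 1) * h2cyc
    rw [hsa] at h2cyc
    linarith

theorem stmt_19 (r : ℝ) (hr : r ≠ 0) :
    (∃ y₁ y₂ y₃ : ℝ, y₁ ≠ y₂ ∧ y₂ ≠ y₃ ∧ y₁ ≠ y₃ ∧
      r * y₁ * (1 - y₁) = y₂ ∧ r * y₂ * (1 - y₂) = y₃ ∧ r * y₃ * (1 - y₃) = y₁) ↔
    (r ≤ 1 - 2 * Real.sqrt 2 ∨ 1 + 2 * Real.sqrt 2 ≤ r) := by
  have h2s : Real.sqrt 2 ^ 2 = 2 := Real.sq_sqrt (by norm_num)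
  have h2nn : (0:ℝ) ≤ Real.sqrt 2 := Real.sqrt_nonneg 2
  constructor
  · rintro ⟨y₁, y₂, y₃, h12, h23, h13, hy1, hy2, hy3⟩
    -- conjugate to x ↦ x^2 + c with x = r/2 - r y, c = r/2 - r^2/4
    have hne : ∀ u v : ℝ, u ≠ v → r/2 - r*u ≠ r/2 - r*v := by
      intro u v huv h
      exact huv (mul_left_cancel₀ hr (by linarith))
    have hc := quad_forward (r/2 - r^2/4) (r/2 - r*y₁) (r/2 - r*y₂) (r/2 - r*y₃)
      (hne _ _ h12) (hne _ _ h23) (hne _ _ h13)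
      (by linear_combination (-r) * hy1) (by linear_combination (-r) * hy2)
      (by linear_combination (-r) * hy3)
    -- 4c + 7 ≤ 0 means (r-1)^2 ≥ 8
    rcases le_total r 1 with h | h
    · left; nlinarith [h2s, h2nn, hc]
    · right; nlinarith [h2s, h2nn, hc]
  · intro h
    have hc : 4*(r/2 - r^2/4) + 7 ≤ 0 := by
      rcases h with h | h
      · nlinarith [h2s, h2nn]
      · nlinarith [h2s, h2nn]
    obtain ⟨a, b, d, hab, hbd, had, h1, h2, h3⟩ := quad_cycle (r/2 - r^2/4) hc
    refine ⟨1/2 - a/r, 1/2 - b/r, 1/2 - d/r, ?_, ?_, ?_, ?_, ?_, ?_⟩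
    · intro h'; apply hab; field_simp at h'; linarith
    · intro h'; apply hbd; field_simp at h'; linarith
    · intro h'; apply had; field_simp at h'; linarith
    · field_simp; linear_combination (-4) * h1
    · field_simp; linear_combination (-4) * h2
    · field_simp; linear_combination (-4) * h3
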